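/- Let k ≥ 4. There exists a family P : ZMod k → ZMod k → Matrix (Fin 2) (Fin 2) ℂ of self-adjoint idempotent matrices such that ∑_{b ∈ ZMod k} P a b = 1 for every a, P a b · P a' b = 0 whenever a ≠ a', and there exist a, b, a', b' ∈ ZMod k with P a b · P a' b' ≠ P a' b' · P a b. -/
import Mathlib


open Matrix

set_option linter.unusedSectionVars false

noncomputable def pM : Matrix (Fin 2) (Fin 2) ℂ := !![1,0;0,0]
noncomputable def qM : Matrix (Fin 2) (Fin 2) ℂ := !![1/2,1/2;1/2,1/2]

lemma pM_sa : pMᴴ = pM := by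
  ext i j; fin_cases i <;> fin_cases j <;> simp [pM]
lemma pM_sq : pM * pM = pM := by
  ext i j; fin_cases i <;> fin_cases j <;> simp [pM, Matrix.mul_apply, Fin.sum_univ_two]
lemma qM_sa : qMᴴ = qM := by
  ext i j; fin_cases i <;> fin_cases j <;> simp [qM]
lemma qM_sq : qM * qM = qM := by
  ext i j; fin_cases i <;> fin_cases j <;>
    simp [qM, Matrix.mul_apply, Fin.sum_univ_two] <;> norm_num
lemma pq_ne : pM * qM ≠ qM * pM := by
  intro h
  have := congrFun (congrFun h 0) 1
  simp [pM, qM, Matrix.mul_apply, Fin.sum_univ_two] at this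

section
variable (k : ℕ) [NeZero k]

noncomputable def sig (a : ZMod k) : ZMod k :=
  if a = 0 then 1 else if a = 1 then 0 else if a = 2 then 3 else if a = 3 then 2 else a

noncomputable def QQ (a : ZMod k) : Matrix (Fin 2) (Fin 2) ℂ :=
  if a = 0 ∨ a = 1 then pM else if a = 2 ∨ a = 3 then qM else 1

noncomputable def PP (a b : ZMod k) : Matrix (Fin 2) (Fin 2) ℂ :=
  (if b = a then QQ k a else 0) + (if b = sig k a then 1 - QQ k a else 0)

variable {k}

lemma distinct (hk : 4 ≤ k) : ∀ m n : ℕ, m < 4 → n < 4 → m ≠ n → (m : ZMod k) ≠ (n : ZMod k) := by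
  intro m n hm hn hmn h
  have := (ZMod.natCast_eq_natCast_iff' m n k).mp h
  rw [Nat.mod_eq_of_lt (by omega : m < k), Nat.mod_eq_of_lt (by omega : n < k)] at this
  omega

lemma d01 (hk : 4 ≤ k) : (0 : ZMod k) ≠ 1 := by
  simpa using distinct hk 0 1 (by norm_num) (by norm_num) (by norm_num)
lemma d02 (hk : 4 ≤ k) : (0 : ZMod k) ≠ 2 := by
  simpa using distinct hk 0 2 (by norm_num) (by norm_num) (by norm_num)
lemma d03 (hk : 4 ≤ k) : (0 : ZMod k) ≠ 3 := by
  simpa using distinct hk 0 3 (by norm_num) (by norm_num) (by norm_num)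
lemma d12 (hk : 4 ≤ k) : (1 : ZMod k) ≠ 2 := by
  simpa using distinct hk 1 2 (by norm_num) (by norm_num) (by norm_num)
lemma d13 (hk : 4 ≤ k) : (1 : ZMod k) ≠ 3 := by
  simpa using distinct hk 1 3 (by norm_num) (by norm_num) (by norm_num)
lemma d23 (hk : 4 ≤ k) : (2 : ZMod k) ≠ 3 := by
  simpa using distinct hk 2 3 (by norm_num) (by norm_num) (by norm_num)

lemma sig_sig (hk : 4 ≤ k) (a : ZMod k) : sig k (sig k a) = a := by
  unfold sig
  split_ifs with h0 h1 h2 h3 <;>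
    simp_all [d01 hk, d02 hk, d03 hk, d12 hk, d13 hk, d23 hk,
      (d01 hk).symm, (d02 hk).symm, (d03 hk).symm, (d12 hk).symm, (d13 hk).symm, (d23 hk).symm]

lemma QQ_sig (hk : 4 ≤ k) (a : ZMod k) : QQ k (sig k a) = QQ k a := by
  unfold sig QQ
  split_ifs with h0 h1 h2 h3 <;>
    simp_all [d01 hk, d02 hk, d03 hk, d12 hk, d13 hk, d23 hk,
      (d01 hk).symm, (d02 hk).symm, (d03 hk).symm, (d12 hk).symm, (d13 hk).symm, (d23 hk).symm]

lemma QQ_proj (a : ZMod k) : (QQ k a)ᴴ = QQ k a ∧ QQ k a * QQ k a = QQ k a := by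
  unfold QQ
  split_ifs <;> simp [pM_sa, pM_sq, qM_sa, qM_sq]

lemma QQ_orth (a : ZMod k) : QQ k a * (1 - QQ k a) = 0 ∧ (1 - QQ k a) * QQ k a = 0 := by
  constructor
  · rw [mul_sub, mul_one, (QQ_proj a).2, sub_self]
  · rw [sub_mul, one_mul, (QQ_proj a).2, sub_self]
end

/-- For `k ≥ 4` there is a family
`P : ZMod k → ZMod k → M₂(ℂ)` of self-adjoint idempotents satisfying the
relations of the quantum endomorphism monoid `End⁺(K_k)` of the complete graph
(rows sum to `1`; columns are orthogonal: `P a b * P a' b = 0` for `a ≠ a'`)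
that contains a non-commuting pair; i.e. `K_k` has a non-classical
two-dimensional quantum endomorphism. -/
theorem stmt17 (k : ℕ) [NeZero k] (hk : 4 ≤ k) :
    ∃ P : ZMod k → ZMod k → Matrix (Fin 2) (Fin 2) ℂ,
      (∀ a b, (P a b)ᴴ = P a b ∧ P a b * P a b = P a b) ∧
      (∀ a, ∑ b : ZMod k, P a b = 1) ∧
      (∀ a a' b, a ≠ a' → P a b * P a' b = 0) ∧
      (∃ a b a' b', P a b * P a' b' ≠ P a' b' * P a b) := by
  refine ⟨PP k, ?_, ?_, ?_, ?_⟩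
  · intro a b
    unfold PP
    rcases QQ_proj (k := k) a with ⟨hsa, hsq⟩
    have h1sa : (1 - QQ k a)ᴴ = 1 - QQ k a := by
      rw [conjTranspose_sub, conjTranspose_one, hsa]
    have h1sq : (1 - QQ k a) * (1 - QQ k a) = 1 - QQ k a := by
      rw [mul_sub, mul_one, sub_mul, one_mul, hsq]; abel
    split_ifs <;>
      first
        | (rw [show QQ k a + (1 - QQ k a) = 1 by abel]; simp)
        | (refine ⟨?_, ?_⟩ <;> simp [hsa, hsq, h1sa, h1sq])
  · intro a
    unfold PP
    rw [Finset.sum_add_distrib]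
    simp [Finset.sum_ite_eq']
  · intro a a' b hne
    unfold PP
    by_cases hba : b = a
    · by_cases hba' : b = a'
      · exact absurd (hba.symm.trans hba') hne
      · by_cases hbs' : b = sig k a'
        · have ha' : a' = sig k b := by rw [hbs', sig_sig hk]
          have hQ : QQ k a' = QQ k a := by rw [ha', QQ_sig hk, hba]
          by_cases hbs : b = sig k a
          · have ha : a = sig k b := by rw [hbs, sig_sig hk]
            exact absurd (ha.trans ha'.symm) hne
          · simp only [if_pos hba, if_neg hbs, if_neg hba', if_pos hbs', add_zero, zero_add, hQ]
            exact (QQ_orth a).1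
        · simp [hba', hbs']
    · by_cases hbs : b = sig k a
      · by_cases hba' : b = a'
        · have ha : a = sig k b := by rw [hbs, sig_sig hk]
          have hQ : QQ k a = QQ k a' := by rw [ha, QQ_sig hk, hba']
          by_cases hbs' : b = sig k a'
          · have ha' : a' = sig k b := by rw [hbs', sig_sig hk]
            exact absurd (ha.trans ha'.symm) hne
          · simp only [if_neg hba, if_pos hbs, if_pos hba', if_neg hbs', add_zero, zero_add, hQ]
            exact (QQ_orth a').2
        · by_cases hbs' : b = sig k a'
          · have : a = a' := by
              have h := hbs.symm.trans hbs'
              have h2 := congrArg (sig k) h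
              rwa [sig_sig hk, sig_sig hk] at h2
            exact absurd this hne
          · simp [hba', hbs']
      · simp [hba, hbs]
  · refine ⟨0, 0, 2, 2, ?_⟩
    have hP00 : PP k 0 0 = pM := by
      unfold PP sig QQ
      simp [d01 hk, (d01 hk).symm]
    have hP22 : PP k 2 2 = qM := by
      unfold PP sig QQ
      simp [d02 hk, d12 hk, d23 hk, (d02 hk).symm, (d12 hk).symm]
    rw [hP00, hP22]
    exact pq_ne
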